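/- Let n ≥ 1, let P_Y be a probability measure on ℝ^n with differentiable density p_Y satisfying ‖∇p_Y(y)‖ ≤ K for all y and some K > 0, and let ỹ ∈ ℝ^n with p_Y(ỹ) = a > 0. Let (μ_y)_{y∈ℝ^n} be a family of probability measures on ℝ^m with finite first moments, and set k = a/(2K) + ‖ỹ‖. Assume: (i) there is C_k < ∞ with W₁(μ_{y₁}, μ_{y₂}) ≤ C_k‖y₁ − y₂‖ for all ‖y₁‖, ‖y₂‖ ≤ k; (ii) P_Z is a probability measure on ℝ^d and G : ℝ^n × ℝ^d → ℝ^m is such that every pushforward G(y,·)_#P_Z has finite first moment, y ↦ G(y,z) is differentiable with ‖∇_y G(y,z)‖ ≤ L_k for all z ∈ supp(P_Z) and all ‖y‖ ≤ k, for some L_k > 0; (iii) the function y ↦ W₁(μ_y, G(y,·)_#P_Z) is measurable and ∫ W₁(μ_y, G(y,·)_#P_Z) dP_Y(y) ≤ ε for some ε > 0 satisfying ε ≤ (a/(2K))^{n+1}·(L_k + C_k)·S_n·a/(2n). Then W₁(μ_{ỹ}, G(ỹ,·)_#P_Z) ≤ (L_k + C_k)^{n/(n+1)}·(1 + 1/n)·(2n/(S_n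 a))^{1/(n+1)}·ε^{1/(n+1)}, where S_n = π^{n/2}/Γ(n/2 + 1). -/

import Mathlib

open MeasureTheory Filter Topology Matrix

/-- The Wasserstein-1 distance: infimum over couplings of the expected distance. -/
noncomputable def W1 {E : Type*} [MeasurableSpace E] [NormedAddCommGroup E]
    (μ ν : Measure E) : ℝ :=
  (⨅ π ∈ {π : Measure (E × E) |
      π.map Prod.fst = μ ∧ π.map Prod.snd = ν ∧ IsProbabilityMeasure π},
    ∫⁻ p, ‖p.1 - p.2‖₊ ∂π).toReal

/-- A measure has finite first moment. -/
def HasFiniteFirstMoment {E : Type*} [MeasurableSpace E] [NormedAddCommGroup E]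
    (μ : Measure E) : Prop :=
  ∫⁻ x, ‖x‖₊ ∂μ ≠ ⊤

/-- Lebesgue volume of the unit ball in ℝ^n. -/
noncomputable def Sn (n : ℕ) : ℝ := Real.pi ^ ((n : ℝ) / 2) / Real.Gamma ((n : ℝ) / 2 + 1)

/-- The (topological) support of a measure: points all of whose open neighborhoods
have positive measure. -/
def measSupport {E : Type*} [TopologicalSpace E] [MeasurableSpace E]
    (μ : Measure E) : Set E := {x | ∀ U : Set E, IsOpen U → x ∈ U → 0 < μ U}

set_option linter.unusedSectionVars false

namespace W1aux

open ProbabilityTheory Set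
open scoped ENNReal NNReal

variable {E : Type*} [MeasurableSpace E] [NormedAddCommGroup E]
  [BorelSpace E] [SecondCountableTopology E]

def Cpl (μ ν : Measure E) : Set (Measure (E × E)) :=
  {π | π.map Prod.fst = μ ∧ π.map Prod.snd = ν ∧ IsProbabilityMeasure π}

noncomputable def W1e (μ ν : Measure E) : ℝ≥0∞ :=
  ⨅ π ∈ Cpl μ ν, ∫⁻ p, ‖p.1 - p.2‖₊ ∂π

lemma W1_eq (μ ν : Measure E) : W1 μ ν = (W1e μ ν).toReal := rfl

lemma W1_nonneg (μ ν : Measure E) : 0 ≤ W1 μ ν := ENNReal.toReal_nonneg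

lemma W1e_le_cost {μ ν : Measure E} {π : Measure (E × E)} (h : π ∈ Cpl μ ν) :
    W1e μ ν ≤ ∫⁻ p, ‖p.1 - p.2‖₊ ∂π := iInf₂_le π h

lemma cost_le_moments {μ ν : Measure E} {π : Measure (E × E)}
    (hf : π.map Prod.fst = μ) (hs : π.map Prod.snd = ν) :
    ∫⁻ p, ‖p.1 - p.2‖₊ ∂π ≤ (∫⁻ x, ‖x‖₊ ∂μ) + ∫⁻ x, ‖x‖₊ ∂ν := by
  have h1 : ∫⁻ p : E × E, ‖p.1‖₊ ∂π = ∫⁻ x, ‖x‖₊ ∂μ := by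
    rw [← hf, lintegral_map measurable_nnnorm.coe_nnreal_ennreal measurable_fst]
  have h2 : ∫⁻ p : E × E, ‖p.2‖₊ ∂π = ∫⁻ x, ‖x‖₊ ∂ν := by
    rw [← hs, lintegral_map measurable_nnnorm.coe_nnreal_ennreal measurable_snd]
  calc ∫⁻ p, ‖p.1 - p.2‖₊ ∂π ≤ ∫⁻ p : E × E, ((‖p.1‖₊ : ℝ≥0∞) + ‖p.2‖₊) ∂π := by
        refine lintegral_mono fun p => ?_
        simpa using ENNReal.coe_le_coe.mpr (nnnorm_sub_le p.1 p.2)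
    _ = (∫⁻ x, ‖x‖₊ ∂μ) + ∫⁻ x, ‖x‖₊ ∂ν := by
        rw [lintegral_add_left measurable_fst.nnnorm.coe_nnreal_ennreal, h1, h2]

lemma prod_mem_Cpl (μ ν : Measure E) [IsProbabilityMeasure μ] [IsProbabilityMeasure ν] :
    μ.prod ν ∈ Cpl μ ν := by
  refine ⟨?_, ?_, inferInstance⟩
  · rw [Measure.map_fst_prod]; simp
  · rw [Measure.map_snd_prod]; simp

lemma W1e_ne_top {μ ν : Measure E} [IsProbabilityMeasure μ] [IsProbabilityMeasure ν]
    (hμ : ∫⁻ x, ‖x‖₊ ∂μ ≠ ⊤) (hν : ∫⁻ x, ‖x‖₊ ∂ν ≠ ⊤) : W1e μ ν ≠ ⊤ := by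
  have h := prod_mem_Cpl μ ν
  refine ne_top_of_le_ne_top ?_ ((W1e_le_cost h).trans (cost_le_moments h.1 h.2.1))
  exact ENNReal.add_ne_top.mpr ⟨hμ, hν⟩

lemma W1_le_of_cost {μ ν : Measure E} {π : Measure (E × E)} (h : π ∈ Cpl μ ν) {c : ℝ}
    (hc : 0 ≤ c) (hcost : ∫⁻ p, ‖p.1 - p.2‖₊ ∂π ≤ ENNReal.ofReal c) : W1 μ ν ≤ c := by
  rw [W1_eq]
  calc (W1e μ ν).toReal ≤ (ENNReal.ofReal c).toReal :=
        ENNReal.toReal_mono ENNReal.ofReal_ne_top ((W1e_le_cost h).trans hcost)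
    _ = c := ENNReal.toReal_ofReal hc

variable [StandardBorelSpace E] [Nonempty E]

lemma glue {μ ρ ν : Measure E}
    {π₁ π₂ : Measure (E × E)} (h₁ : π₁ ∈ Cpl μ ρ) (h₂ : π₂ ∈ Cpl ρ ν) :
    ∃ π ∈ Cpl μ ν, ∫⁻ p, ‖p.1 - p.2‖₊ ∂π ≤
      (∫⁻ p, ‖p.1 - p.2‖₊ ∂π₁) + ∫⁻ p, ‖p.1 - p.2‖₊ ∂π₂ := by
  obtain ⟨h1f, h1s, h1p⟩ := h₁
  obtain ⟨h2f, h2s, h2p⟩ := h₂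
  set κ := π₂.condKernel with hκdef
  have hρκ : ρ ⊗ₘ κ = π₂ := by
    have h := π₂.disintegrate π₂.condKernel
    rwa [show π₂.fst = ρ from h2f] at h
  set κ' : Kernel (E × E) E := κ.comap Prod.snd measurable_snd with hκ'def
  haveI : IsMarkovKernel κ' := Kernel.IsMarkovKernel.comap _ _
  set τ := π₁ ⊗ₘ κ' with hτdef
  have hg : Measurable (fun p : (E × E) × E => (p.1.1, p.2)) :=
    measurable_fst.fst.prodMk measurable_snd
  have hg' : Measurable (fun p : (E × E) × E => (p.1.2, p.2)) :=
    measurable_fst.snd.prodMk measurable_snd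
  have hτfst : τ.map Prod.fst = π₁ := Measure.fst_compProd π₁ κ'
  haveI : IsProbabilityMeasure τ := by
    constructor
    rw [hτdef, Measure.compProd_apply MeasurableSet.univ]
    simp [measure_univ]
  haveI : IsProbabilityMeasure ρ := by
    rw [← h2f]; exact Measure.isProbabilityMeasure_map measurable_fst.aemeasurable
  have hτsnd : τ.map (fun p => (p.1.2, p.2)) = π₂ := by
    refine MeasureTheory.ext_of_generate_finite _ generateFrom_prod.symm isPiSystem_prod
      ?_ ?_
    · rintro u ⟨s, hs, t, ht, rfl⟩
      simp only [mem_setOf_eq] at hs ht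
      rw [Measure.map_apply hg' (hs.prod ht), ← hρκ,
        Measure.compProd_apply_prod hs ht, hτdef,
        Measure.compProd_apply (hg' (hs.prod ht))]
      have hint : ∀ q : E × E, κ' q (Prod.mk q ⁻¹' ((fun p : (E × E) × E => (p.1.2, p.2)) ⁻¹' s ×ˢ t))
          = (Prod.snd ⁻¹' s).indicator (fun q : E × E => κ q.2 t) q := by
        intro q
        by_cases hq : q.2 ∈ s
        · have : (Prod.mk q ⁻¹' ((fun p : (E × E) × E => (p.1.2, p.2)) ⁻¹' s ×ˢ t)) = t := by
            ext z; simp [hq]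
          rw [this, indicator_of_mem (show q ∈ Prod.snd ⁻¹' s from hq), hκ'def, Kernel.comap_apply]
        · have : (Prod.mk q ⁻¹' ((fun p : (E × E) × E => (p.1.2, p.2)) ⁻¹' s ×ˢ t)) = ∅ := by
            ext z; simp [hq]
          rw [this, indicator_of_notMem (show q ∉ Prod.snd ⁻¹' s from hq), measure_empty]
      rw [lintegral_congr hint, lintegral_indicator (measurable_snd hs),
        ← h1s, setLIntegral_map hs (κ.measurable_coe ht) measurable_snd]
    · rw [Measure.map_apply hg' MeasurableSet.univ]
      simp [measure_univ]
  refine ⟨τ.map (fun p => (p.1.1, p.2)), ⟨?_, ?_, ?_⟩, ?_⟩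
  · rw [Measure.map_map measurable_fst hg]
    have : (Prod.fst ∘ fun p : (E × E) × E => (p.1.1, p.2)) = (Prod.fst ∘ Prod.fst) := rfl
    rw [this, ← Measure.map_map measurable_fst measurable_fst, hτfst, h1f]
  · rw [Measure.map_map measurable_snd hg]
    have : (Prod.snd ∘ fun p : (E × E) × E => (p.1.1, p.2))
        = (Prod.snd ∘ fun p : (E × E) × E => (p.1.2, p.2)) := rfl
    rw [this, ← Measure.map_map measurable_snd hg', hτsnd, h2s]
  · exact Measure.isProbabilityMeasure_map hg.aemeasurable
  · have hmn : Measurable fun p : E × E => (‖p.1 - p.2‖₊ : ℝ≥0∞) :=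
      (measurable_fst.sub measurable_snd).nnnorm.coe_nnreal_ennreal
    rw [lintegral_map hmn hg]
    have step1 : ∫⁻ q, (‖q.1.1 - q.2‖₊ : ℝ≥0∞) ∂τ
        ≤ ∫⁻ q : (E × E) × E, ((‖q.1.1 - q.1.2‖₊ : ℝ≥0∞) + (‖q.1.2 - q.2‖₊ : ℝ≥0∞)) ∂τ := by
      refine lintegral_mono fun q => ?_
      have : ‖q.1.1 - q.2‖₊ ≤ ‖q.1.1 - q.1.2‖₊ + ‖q.1.2 - q.2‖₊ := by
        calc ‖q.1.1 - q.2‖₊ = ‖(q.1.1 - q.1.2) + (q.1.2 - q.2)‖₊ := by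
              rw [sub_add_sub_cancel]
          _ ≤ _ := nnnorm_add_le _ _
      simpa using ENNReal.coe_le_coe.mpr this
    refine le_trans step1 ?_
    rw [lintegral_add_left (f := fun q : (E × E) × E => (‖q.1.1 - q.1.2‖₊ : ℝ≥0∞)) ((measurable_fst.fst.sub measurable_fst.snd).nnnorm.coe_nnreal_ennreal)]
    have e1 : ∫⁻ q : (E × E) × E, (‖q.1.1 - q.1.2‖₊ : ℝ≥0∞) ∂τ = ∫⁻ p, ‖p.1 - p.2‖₊ ∂π₁ := by
      rw [← hτfst, lintegral_map hmn measurable_fst]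
    have e2 : ∫⁻ q : (E × E) × E, (‖q.1.2 - q.2‖₊ : ℝ≥0∞) ∂τ = ∫⁻ p, ‖p.1 - p.2‖₊ ∂π₂ := by
      rw [← hτsnd, lintegral_map hmn hg']
    rw [e1, e2]

lemma W1e_triangle (μ ρ ν : Measure E)
    (h1 : W1e μ ρ ≠ ⊤) (h2 : W1e ρ ν ≠ ⊤) :
    W1e μ ν ≤ W1e μ ρ + W1e ρ ν := by
  refine ENNReal.le_of_forall_pos_le_add fun ε hε _ => ?_
  have hε2 : ((ε : ℝ≥0∞) / 2) ≠ 0 := by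
    simp [ENNReal.div_eq_zero_iff, hε.ne']
  obtain ⟨π₁, hπ₁, hc₁⟩ : ∃ π ∈ Cpl μ ρ, ∫⁻ p, ‖p.1 - p.2‖₊ ∂π < W1e μ ρ + ε / 2 := by
    have h := ENNReal.lt_add_right h1 hε2
    conv_lhs at h => rw [W1e]
    simpa only [iInf_lt_iff, exists_prop] using h
  obtain ⟨π₂, hπ₂, hc₂⟩ : ∃ π ∈ Cpl ρ ν, ∫⁻ p, ‖p.1 - p.2‖₊ ∂π < W1e ρ ν + ε / 2 := by
    have h := ENNReal.lt_add_right h2 hε2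
    conv_lhs at h => rw [W1e]
    simpa only [iInf_lt_iff, exists_prop] using h
  obtain ⟨π, hπ, hcost⟩ := glue hπ₁ hπ₂
  calc W1e μ ν ≤ _ := W1e_le_cost hπ
    _ ≤ _ := hcost
    _ ≤ (W1e μ ρ + ε / 2) + (W1e ρ ν + ε / 2) := add_le_add hc₁.le hc₂.le
    _ = W1e μ ρ + W1e ρ ν + ε := by
        rw [add_add_add_comm, ENNReal.add_halves]

lemma W1_triangle (μ ρ ν : Measure E)
    [IsProbabilityMeasure μ] [IsProbabilityMeasure ρ] [IsProbabilityMeasure ν]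
    (hμ : ∫⁻ x, ‖x‖₊ ∂μ ≠ ⊤) (hρ : ∫⁻ x, ‖x‖₊ ∂ρ ≠ ⊤) (hν : ∫⁻ x, ‖x‖₊ ∂ν ≠ ⊤) :
    W1 μ ν ≤ W1 μ ρ + W1 ρ ν := by
  have h1 := W1e_ne_top hμ hρ
  have h2 := W1e_ne_top hρ hν
  have h := W1e_triangle μ ρ ν h1 h2
  rw [W1_eq, W1_eq, W1_eq, ← ENNReal.toReal_add h1 h2]
  exact ENNReal.toReal_mono (ENNReal.add_ne_top.mpr ⟨h1, h2⟩) h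

lemma measSupport_compl_null {X : Type*} [TopologicalSpace X] [MeasurableSpace X]
    [SecondCountableTopology X] (μ : Measure X) : μ (measSupport μ)ᶜ = 0 := by
  have hset : (measSupport μ)ᶜ = ⋃₀ {U : Set X | IsOpen U ∧ μ U = 0} := by
    ext x
    simp only [measSupport, mem_compl_iff, mem_setOf_eq, mem_sUnion, not_forall]
    constructor
    · rintro ⟨U, hU, hxU, hnot⟩
      exact ⟨U, ⟨hU, by simpa [pos_iff_ne_zero] using hnot⟩, hxU⟩
    · rintro ⟨U, ⟨hU, hU0⟩, hxU⟩
      exact ⟨U, hU, hxU, by simp [hU0]⟩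
  obtain ⟨T, hTc, hTsub, hTU⟩ := TopologicalSpace.isOpen_sUnion_countable
    {U : Set X | IsOpen U ∧ μ U = 0} (fun s hs => hs.1)
  rw [hset, ← hTU]
  exact (measure_sUnion_null_iff hTc).mpr fun s hs => (hTsub hs).2

lemma ae_mem_measSupport {X : Type*} [TopologicalSpace X] [MeasurableSpace X]
    [SecondCountableTopology X] (μ : Measure X) : ∀ᵐ x ∂μ, x ∈ measSupport μ :=
  (ae_iff.2 (by exact measSupport_compl_null μ))

lemma Sn_pos (n : ℕ) : 0 < Sn n := by
  apply div_pos (Real.rpow_pos_of_pos Real.pi_pos _)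
  exact Real.Gamma_pos_of_pos (by positivity)

lemma euclidean_vol_ball {n : ℕ} (hn : 1 ≤ n) (x : EuclideanSpace ℝ (Fin n)) {r : ℝ}
    (hr : 0 ≤ r) :
    volume (Metric.ball x r) = ENNReal.ofReal (Sn n * r ^ n) := by
  haveI : Nonempty (Fin n) := ⟨⟨0, hn⟩⟩
  rw [EuclideanSpace.volume_ball, Fintype.card_fin]
  rw [← ENNReal.ofReal_pow hr, ← ENNReal.ofReal_mul (by positivity)]
  congr 1
  have hs : Real.sqrt Real.pi ^ n = Real.pi ^ ((n : ℝ) / 2) := by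
    rw [Real.sqrt_eq_rpow, ← Real.rpow_natCast (Real.pi ^ ((1:ℝ)/2)) n,
      ← Real.rpow_mul Real.pi_pos.le]
    ring_nf
  rw [hs, Sn]
  ring

end W1aux

open W1aux Set ProbabilityTheory
open scoped ENNReal NNReal

set_option maxHeartbeats 3200000 in
/-- pointwise Wasserstein bound, optimized radius version. -/
theorem stmt_7 {n m d : ℕ} (hn : 1 ≤ n)
    (pY : EuclideanSpace ℝ (Fin n) → ℝ)
    (PY : Measure (EuclideanSpace ℝ (Fin n)))
    (hPYprob : IsProbabilityMeasure PY)
    (hPY : PY = volume.withDensity (fun y => ENNReal.ofReal (pY y)))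
    (K : ℝ) (hK : 0 < K)
    (DY : EuclideanSpace ℝ (Fin n) → (EuclideanSpace ℝ (Fin n) →L[ℝ] ℝ))
    (hderivY : ∀ y, HasFDerivAt pY (DY y) y)
    (hDYbound : ∀ y, ‖DY y‖ ≤ K)
    (ytil : EuclideanSpace ℝ (Fin n)) (a : ℝ) (ha : 0 < a) (hpa : pY ytil = a)
    (μ : EuclideanSpace ℝ (Fin n) → Measure (EuclideanSpace ℝ (Fin m)))
    (hμprob : ∀ y, IsProbabilityMeasure (μ y))
    (hμmom : ∀ y, HasFiniteFirstMoment (μ y))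
    (k : ℝ) (hk : k = a / (2 * K) + ‖ytil‖)
    (Ck : ℝ)
    (hCk : ∀ y₁ y₂ : EuclideanSpace ℝ (Fin n), ‖y₁‖ ≤ k → ‖y₂‖ ≤ k →
      W1 (μ y₁) (μ y₂) ≤ Ck * ‖y₁ - y₂‖)
    (PZ : Measure (EuclideanSpace ℝ (Fin d))) (hPZprob : IsProbabilityMeasure PZ)
    (G : EuclideanSpace ℝ (Fin n) → EuclideanSpace ℝ (Fin d) → EuclideanSpace ℝ (Fin m))
    (hGmeas : ∀ y : EuclideanSpace ℝ (Fin n), Measurable (G y))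
    (hGmom : ∀ y : EuclideanSpace ℝ (Fin n), HasFiniteFirstMoment (PZ.map (G y)))
    (Lk : ℝ) (hLk : 0 < Lk)
    (DG : EuclideanSpace ℝ (Fin n) → EuclideanSpace ℝ (Fin d) →
      (EuclideanSpace ℝ (Fin n) →L[ℝ] EuclideanSpace ℝ (Fin m)))
    (hderivG : ∀ z ∈ measSupport PZ, ∀ y : EuclideanSpace ℝ (Fin n), ‖y‖ ≤ k →
      HasFDerivAt (fun y' => G y' z) (DG y z) y ∧ ‖DG y z‖ ≤ Lk)
    (hWmeas : Measurable fun y => W1 (μ y) (PZ.map (G y)))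
    (ε : ℝ) (hε0 : 0 < ε)
    (hεle : ε ≤ (a / (2 * K)) ^ (n + 1) * ((Lk + Ck) * Sn n * a) / (2 * n))
    (hint : ∫⁻ y, ENNReal.ofReal (W1 (μ y) (PZ.map (G y))) ∂PY ≤ ENNReal.ofReal ε) :
    W1 (μ ytil) (PZ.map (G ytil)) ≤
      (Lk + Ck) ^ ((n : ℝ) / ((n : ℝ) + 1)) * (1 + 1 / (n : ℝ)) *
        (2 * n / (Sn n * a)) ^ (1 / ((n : ℝ) + 1)) * ε ^ (1 / ((n : ℝ) + 1)) := by
  classical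
  have hn0 : (0:ℝ) < n := by exact_mod_cast Nat.lt_of_lt_of_le Nat.zero_lt_one hn
  have hS := Sn_pos n
  have hak : 0 < a / (2 * K) := by positivity
  have hytil : ‖ytil‖ ≤ k := by rw [hk]; linarith
  -- Ck is nonnegative
  have hCk0 : 0 ≤ Ck := by
    set v := min (a / (2 * K)) 1 with hv
    have hv0 : 0 < v := lt_min hak one_pos
    set y₂ : EuclideanSpace ℝ (Fin n) := EuclideanSpace.single (⟨0, hn⟩ : Fin n) v with hy₂
    have hy₂n : ‖y₂‖ = v := by
      rw [hy₂, EuclideanSpace.norm_single, Real.norm_eq_abs, abs_of_pos hv0]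
    have h0k : ‖(0 : EuclideanSpace ℝ (Fin n))‖ ≤ k := by
      rw [norm_zero, hk]; positivity
    have h2k : ‖y₂‖ ≤ k := by
      rw [hy₂n, hk]
      have : v ≤ a / (2 * K) := min_le_left _ _
      linarith [norm_nonneg ytil]
    have h := hCk 0 y₂ h0k h2k
    have hW := W1_nonneg (μ 0) (μ y₂)
    have hne : ‖(0 : EuclideanSpace ℝ (Fin n)) - y₂‖ = v := by
      rw [zero_sub, norm_neg, hy₂n]
    rw [hne] at h
    nlinarith
  have hL : 0 < Lk + Ck := by linarith
  -- the radius δ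
  set T : ℝ := 2 * n * ε / ((Lk + Ck) * Sn n * a) with hTdef
  have hT0 : 0 < T := div_pos (by positivity) (by positivity)
  set δ : ℝ := T ^ (1 / ((n:ℝ) + 1)) with hδdef
  have hδ0 : 0 < δ := Real.rpow_pos_of_pos hT0 _
  have hexp : (1 / ((n:ℝ) + 1)) * ((n:ℝ) + 1) = 1 := by
    field_simp
  have hδpow : δ ^ (n + 1) = T := by
    rw [hδdef, ← Real.rpow_natCast (T ^ (1 / ((n:ℝ) + 1))) (n + 1),
      ← Real.rpow_mul hT0.le]
    push_cast
    rw [show (1 / ((n:ℝ) + 1)) * ((n:ℝ) + 1) = 1 by field_simp, Real.rpow_one]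
  have hδle : δ ≤ a / (2 * K) := by
    have h1 : T ≤ (a / (2 * K)) ^ (n + 1) := by
      rw [hTdef, div_le_iff₀ (by positivity)]
      have h2 : ε * (2 * (n:ℝ)) ≤ (a / (2 * K)) ^ (n + 1) * ((Lk + Ck) * Sn n * a) := by
        rw [le_div_iff₀ (by positivity)] at hεle
        linarith
      nlinarith
    calc δ = T ^ (1 / ((n:ℝ) + 1)) := rfl
      _ ≤ ((a / (2 * K)) ^ (n + 1)) ^ (1 / ((n:ℝ) + 1)) :=
          Real.rpow_le_rpow hT0.le h1 (by positivity)
      _ = a / (2 * K) := by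
          rw [← Real.rpow_natCast (a / (2 * K)) (n + 1), ← Real.rpow_mul hak.le]
          push_cast
          rw [show ((n:ℝ) + 1) * (1 / ((n:ℝ) + 1)) = 1 by field_simp, Real.rpow_one]
  -- the ball and its mass
  set B : Set (EuclideanSpace ℝ (Fin n)) := Metric.ball ytil δ with hBdef
  have hpYcont : Continuous pY :=
    continuous_iff_continuousAt.mpr fun x => (hderivY x).continuousAt
  have hpYlip : ∀ y, |pY y - a| ≤ K * ‖y - ytil‖ := by
    intro y
    have h := Convex.norm_image_sub_le_of_norm_hasFDerivWithin_le
      (fun x _ => (hderivY x).hasFDerivWithinAt) (fun x _ => hDYbound x)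
      convex_univ (mem_univ ytil) (mem_univ y)
    simpa [hpa, Real.norm_eq_abs] using h
  have hPYB : ENNReal.ofReal (a / 2 * (Sn n * δ ^ n)) ≤ PY B := by
    have hlow : ∀ y ∈ B, ENNReal.ofReal (a / 2) ≤ ENNReal.ofReal (pY y) := by
      intro y hy
      apply ENNReal.ofReal_le_ofReal
      have hd : ‖y - ytil‖ < δ := by
        simpa [dist_eq_norm] using Metric.mem_ball.mp hy
      have h1 := hpYlip y
      have hKd : K * ‖y - ytil‖ ≤ K * δ := by nlinarith [norm_nonneg (y - ytil)]
      have hKd2 : K * δ ≤ a / 2 := by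
        have h := (le_div_iff₀ (by positivity : (0:ℝ) < 2 * K)).mp hδle
        linarith
      have := abs_le.mp h1
      linarith [this.1]
    calc ENNReal.ofReal (a / 2 * (Sn n * δ ^ n))
        = ENNReal.ofReal (a / 2) * volume B := by
          rw [hBdef, euclidean_vol_ball hn ytil hδ0.le,
            ← ENNReal.ofReal_mul (by positivity)]
      _ = ∫⁻ _ in B, ENNReal.ofReal (a / 2) ∂volume := by
          rw [setLIntegral_const]
      _ ≤ ∫⁻ y in B, ENNReal.ofReal (pY y) ∂volume :=
          setLIntegral_mono (ENNReal.measurable_ofReal.comp hpYcont.measurable) hlow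
      _ = PY B := by
          rw [hPY, withDensity_apply _ Metric.isOpen_ball.measurableSet]
  set b : ℝ := (PY B).toReal with hbdef
  have hPYBne : PY B ≠ ⊤ := measure_ne_top PY B
  have hbv : a / 2 * (Sn n * δ ^ n) ≤ b := by
    have h := ENNReal.toReal_mono hPYBne hPYB
    rwa [ENNReal.toReal_ofReal (by positivity)] at h
  have hb0 : 0 < b := lt_of_lt_of_le (by positivity) hbv
  -- measures involved
  haveI hνprob : ∀ y : EuclideanSpace ℝ (Fin n), IsProbabilityMeasure (PZ.map (G y)) :=
    fun y => Measure.isProbabilityMeasure_map (hGmeas y).aemeasurable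
  -- existence of good points
  have hgood : ∀ η > (0:ℝ), ∃ y ∈ B, W1 (μ y) (PZ.map (G y)) < ε / b + η := by
    intro η hη
    by_contra hcon
    push_neg at hcon
    have hmono : ENNReal.ofReal (ε / b + η) * PY B
        ≤ ∫⁻ y in B, ENNReal.ofReal (W1 (μ y) (PZ.map (G y))) ∂PY := by
      rw [← setLIntegral_const]
      exact setLIntegral_mono (ENNReal.measurable_ofReal.comp hWmeas)
        (fun y hy => ENNReal.ofReal_le_ofReal (hcon y hy))
    have hchain : ENNReal.ofReal (ε / b + η) * PY B ≤ ENNReal.ofReal ε :=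
      hmono.trans ((setLIntegral_le_lintegral _ _).trans hint)
    have hPB : PY B = ENNReal.ofReal b := (ENNReal.ofReal_toReal hPYBne).symm
    rw [hPB, ← ENNReal.ofReal_mul (by positivity)] at hchain
    have : (ε / b + η) * b ≤ ε := by
      have := (ENNReal.ofReal_le_ofReal_iff hε0.le).mp hchain
      linarith
    have hεb : (ε / b + η) * b = ε + η * b := by
      field_simp
    nlinarith
  -- Lipschitz bound for the pushforwards
  have hGlip : ∀ y : EuclideanSpace ℝ (Fin n), ‖y‖ ≤ k →
      W1 (PZ.map (G y)) (PZ.map (G ytil)) ≤ Lk * ‖y - ytil‖ := by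
    intro y hyk
    have hmeas3 : Measurable fun z => (G y z, G ytil z) :=
      (hGmeas y).prodMk (hGmeas ytil)
    have hmem : PZ.map (fun z => (G y z, G ytil z)) ∈ Cpl (PZ.map (G y)) (PZ.map (G ytil)) := by
      refine ⟨?_, ?_, Measure.isProbabilityMeasure_map hmeas3.aemeasurable⟩
      · rw [Measure.map_map measurable_fst hmeas3]; rfl
      · rw [Measure.map_map measurable_snd hmeas3]; rfl
    refine W1_le_of_cost hmem (by positivity) ?_
    have hmn : Measurable fun p : EuclideanSpace ℝ (Fin m) × EuclideanSpace ℝ (Fin m) =>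
        (‖p.1 - p.2‖₊ : ℝ≥0∞) :=
      (measurable_fst.sub measurable_snd).nnnorm.coe_nnreal_ennreal
    rw [lintegral_map hmn hmeas3]
    calc ∫⁻ z, (‖G y z - G ytil z‖₊ : ℝ≥0∞) ∂PZ
        ≤ ∫⁻ _, ENNReal.ofReal (Lk * ‖y - ytil‖) ∂PZ := by
          refine lintegral_mono_ae ?_
          filter_upwards [ae_mem_measSupport PZ] with z hz
          have hlip : ‖G y z - G ytil z‖ ≤ Lk * ‖y - ytil‖ := by
            refine Convex.norm_image_sub_le_of_norm_hasFDerivWithin_le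
              (f := fun y' => G y' z) (f' := fun y' => DG y' z) (s := Metric.closedBall 0 k)
              (fun x hx => ((hderivG z hz x (by simpa using hx)).1).hasFDerivWithinAt)
              (fun x hx => (hderivG z hz x (by simpa using hx)).2)
              (convex_closedBall 0 k) (by simpa using hytil) (by simpa using hyk)
          rw [← ENNReal.ofReal_coe_nnreal, coe_nnnorm]
          exact ENNReal.ofReal_le_ofReal hlip
      _ = ENNReal.ofReal (Lk * ‖y - ytil‖) := by
          simp [lintegral_const, measure_univ]
  -- main estimate for every positive η
  have hmain : W1 (μ ytil) (PZ.map (G ytil)) ≤ (Lk + Ck) * δ + ε / b := by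
    by_contra hlt
    push_neg at hlt
    set η : ℝ := (W1 (μ ytil) (PZ.map (G ytil)) - ((Lk + Ck) * δ + ε / b)) / 2 with hηdef
    have hη0 : 0 < η := by rw [hηdef]; linarith
    obtain ⟨y, hyB, hyW⟩ := hgood η hη0
    have hdist : ‖y - ytil‖ < δ := by
      simpa [dist_eq_norm] using Metric.mem_ball.mp hyB
    have hyk : ‖y‖ ≤ k := by
      calc ‖y‖ = ‖(y - ytil) + ytil‖ := by rw [sub_add_cancel]
        _ ≤ ‖y - ytil‖ + ‖ytil‖ := norm_add_le _ _
        _ ≤ δ + ‖ytil‖ := by linarith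
        _ ≤ a / (2 * K) + ‖ytil‖ := by linarith
        _ = k := hk.symm
    haveI := hμprob ytil; haveI := hμprob y
    have t1 : W1 (μ ytil) (PZ.map (G ytil)) ≤ W1 (μ ytil) (μ y) + W1 (μ y) (PZ.map (G ytil)) :=
      W1_triangle _ _ _ (hμmom ytil) (hμmom y) (hGmom ytil)
    have t2 : W1 (μ y) (PZ.map (G ytil)) ≤ W1 (μ y) (PZ.map (G y)) + W1 (PZ.map (G y)) (PZ.map (G ytil)) :=
      W1_triangle _ _ _ (hμmom y) (hGmom y) (hGmom ytil)
    have hA : W1 (μ ytil) (μ y) ≤ Ck * δ := by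
      have h := hCk ytil y hytil hyk
      have : ‖ytil - y‖ ≤ δ := by rw [norm_sub_rev]; linarith
      nlinarith
    have hCb : W1 (PZ.map (G y)) (PZ.map (G ytil)) ≤ Lk * δ := by
      have h := hGlip y hyk
      nlinarith
    have : W1 (μ ytil) (PZ.map (G ytil)) ≤ Ck * δ + (ε / b + η) + Lk * δ := by
      linarith
    rw [hηdef] at this
    linarith
  -- convert ε / b to the closed form
  have hvb : ε / b ≤ (Lk + Ck) * δ / n := by
    have hv0 : (0:ℝ) < a / 2 * (Sn n * δ ^ n) := by positivity
    have h1 : ε / b ≤ ε / (a / 2 * (Sn n * δ ^ n)) :=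
      div_le_div_of_nonneg_left hε0.le hv0 hbv
    have h2 : ε / (a / 2 * (Sn n * δ ^ n)) = (Lk + Ck) * δ / n := by
      rw [div_eq_div_iff hv0.ne' hn0.ne']
      have hpow : δ ^ n * δ = T := by rw [← pow_succ, hδpow]
      have hTe : T * ((Lk + Ck) * Sn n * a) = 2 * n * ε :=
        div_mul_cancel₀ _ (by positivity)
      linear_combination (-((Lk + Ck) * Sn n * a / 2)) * hpow + (-(1/2)) * hTe
    rw [h2] at h1
    exact h1
  -- final closed-form computation
  have hLL : (Lk + Ck) * ((Lk + Ck)⁻¹) ^ (1 / ((n:ℝ) + 1)) =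
      (Lk + Ck) ^ ((n : ℝ) / ((n : ℝ) + 1)) := by
    rw [Real.inv_rpow hL.le, ← Real.rpow_neg hL.le,
      show (Lk + Ck) * (Lk + Ck) ^ (-(1 / ((n:ℝ) + 1))) =
        (Lk + Ck) ^ ((1:ℝ) + -(1 / ((n:ℝ) + 1))) by
          rw [Real.rpow_add hL, Real.rpow_one]]
    congr 1
    field_simp
    ring
  have hTsplit : T = (2 * n / (Sn n * a)) * ε * (Lk + Ck)⁻¹ := by
    rw [hTdef]; field_simp
  have hδsplit : δ = (2 * n / (Sn n * a)) ^ (1 / ((n:ℝ) + 1)) * ε ^ (1 / ((n:ℝ) + 1)) *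
      ((Lk + Ck)⁻¹) ^ (1 / ((n:ℝ) + 1)) := by
    rw [hδdef, hTsplit, Real.mul_rpow (by positivity) (by positivity),
      Real.mul_rpow (by positivity) (by positivity)]
  have hkey : (Lk + Ck) * δ = (Lk + Ck) ^ ((n : ℝ) / ((n : ℝ) + 1)) *
      (2 * n / (Sn n * a)) ^ (1 / ((n:ℝ) + 1)) * ε ^ (1 / ((n:ℝ) + 1)) := by
    rw [hδsplit, ← hLL]; ring
  have hfinal : (Lk + Ck) * δ + (Lk + Ck) * δ / n =
      (Lk + Ck) ^ ((n : ℝ) / ((n : ℝ) + 1)) * (1 + 1 / (n : ℝ)) *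
        (2 * n / (Sn n * a)) ^ (1 / ((n : ℝ) + 1)) * ε ^ (1 / ((n : ℝ) + 1)) := by
    have h1 : (Lk + Ck) * δ + (Lk + Ck) * δ / n = ((Lk + Ck) * δ) * (1 + 1 / n) := by
      field_simp
    rw [h1, hkey]; ring
  calc W1 (μ ytil) (PZ.map (G ytil)) ≤ (Lk + Ck) * δ + ε / b := hmain
    _ ≤ (Lk + Ck) * δ + (Lk + Ck) * δ / n := by linarith
    _ = _ := hfinal
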